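/- Let A ∈ ℝ^{m×n} have all rows nonzero, let b ∈ range(A), and let ε ∈ ℝᵐ. Let {x_k} be the RK iterates for the noisy system Ax ≈ b + ε (i.e., the RK update uses the rows of A and the right-hand side b̃ = b + ε) with initial point x_0 ∈ range(Aᵀ), and let x_LS = A†b. Then for every k ≥ 0: 𝔼‖x_k − x_LS‖² ≤ (1 − σ_min²/‖A‖_F²)^k ‖x_0 − x_LS‖² + ‖ε‖²/σ_min², where σ_min is the smallest nonzero singular value of A. -/

import Mathlib

open Matrix

noncomputable section

namespace RK

/-- The Euclidean inner product on `Fin n → ℝ`. -/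
def dot {n : ℕ} (v w : Fin n → ℝ) : ℝ := ∑ i, v i * w i

/-- The squared Euclidean norm on `Fin n → ℝ`. -/
def normSq {n : ℕ} (v : Fin n → ℝ) : ℝ := ∑ i, v i ^ 2

/-- The Euclidean norm on `Fin n → ℝ`. -/
def euclNorm {n : ℕ} (v : Fin n → ℝ) : ℝ := Real.sqrt (normSq v)

/-- The squared Frobenius norm of a matrix. -/
def frobSq {m n : ℕ} (A : Matrix (Fin m) (Fin n) ℝ) : ℝ := ∑ i, ∑ j, A i j ^ 2

/-- One step of the (randomized) Kaczmarz method for the system `A x ≈ b`, using row `i`: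
`x ↦ x - ((aᵢᵀ x - bᵢ) / ‖aᵢ‖²) aᵢ`. -/
def rkStep {m n : ℕ} (A : Matrix (Fin m) (Fin n) ℝ) (b : Fin m → ℝ) (i : Fin m)
    (x : Fin n → ℝ) : Fin n → ℝ :=
  x - ((dot (A i) x - b i) / normSq (A i)) • A i

/-- `rkExp A b x0 k f` is the expectation `𝔼 f(x_k)` of `f` evaluated at the `k`-th iterate of the
randomized Kaczmarz algorithm applied to `A x ≈ b` started at `x0`, where at each step the row
index `i` is drawn independently at random with probability `‖aᵢ‖² / ‖A‖_F²`. -/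
def rkExp {m n : ℕ} (A : Matrix (Fin m) (Fin n) ℝ) (b : Fin m → ℝ) (x0 : Fin n → ℝ) :
    ℕ → ((Fin n → ℝ) → ℝ) → ℝ
  | 0, f => f x0
  | k + 1, f => rkExp A b x0 k fun x => ∑ i, normSq (A i) / frobSq A * f (rkStep A b i x)

/-- The four Penrose conditions: `B` is the Moore–Penrose pseudoinverse of `A`. -/
def IsMoorePenrose {m n : ℕ} (A : Matrix (Fin m) (Fin n) ℝ)
    (B : Matrix (Fin n) (Fin m) ℝ) : Prop :=
  A * B * A = A ∧ B * A * B = B ∧ (A * B)ᵀ = A * B ∧ (B * A)ᵀ = B * A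

/-- The row space `range(Aᵀ)` of a matrix `A`. -/
def rowSpace {m n : ℕ} (A : Matrix (Fin m) (Fin n) ℝ) : Set (Fin n → ℝ) :=
  {v | ∃ u : Fin m → ℝ, v = Aᵀ.mulVec u}

/-- The null space (kernel) of a matrix `A`. -/
def nullSpace {m n : ℕ} (A : Matrix (Fin m) (Fin n) ℝ) : Set (Fin n → ℝ) :=
  {v | A.mulVec v = 0}

/-- `σ` is the smallest nonzero singular value of `A`: `σ > 0`, `σ²` is an eigenvalue of `AᵀA`,
and `σ²` is less than or equal to every nonzero eigenvalue of `AᵀA`. -/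
def IsSmallestNonzeroSingularValue {m n : ℕ} (A : Matrix (Fin m) (Fin n) ℝ) (σ : ℝ) : Prop :=
  0 < σ ∧ (∃ v : Fin n → ℝ, v ≠ 0 ∧ (Aᵀ * A).mulVec v = σ ^ 2 • v) ∧
    ∀ μ : ℝ, μ ≠ 0 → (∃ v : Fin n → ℝ, v ≠ 0 ∧ (Aᵀ * A).mulVec v = μ • v) → σ ^ 2 ≤ μ

/-! ### Auxiliary lemmas -/

open RealInnerProductSpace in
lemma inner_eq_dot {n : ℕ} (x y : EuclideanSpace ℝ (Fin n)) : ⟪x, y⟫ = dot x y := by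
  simp [PiLp.inner_apply, dot]
  exact Finset.sum_congr rfl fun i _ => mul_comm _ _

lemma dot_eq {n : ℕ} (v w : Fin n → ℝ) : dot v w = v ⬝ᵥ w := rfl

lemma dot_comm {n : ℕ} (v w : Fin n → ℝ) : dot v w = dot w v := by
  simp [dot, mul_comm]

lemma dot_smul_left {n : ℕ} (a : ℝ) (x y : Fin n → ℝ) : dot (a • x) y = a * dot x y := by
  simp [dot, Finset.mul_sum, mul_assoc]

lemma normSq_eq_dot {n : ℕ} (v : Fin n → ℝ) : normSq v = dot v v := by simp [normSq, dot, sq]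

lemma normSq_nonneg {n : ℕ} (v : Fin n → ℝ) : 0 ≤ normSq v :=
  Finset.sum_nonneg fun _ _ => sq_nonneg _

lemma normSq_eq_zero {n : ℕ} {v : Fin n → ℝ} (h : normSq v = 0) : v = 0 := by
  funext i
  have := (Finset.sum_eq_zero_iff_of_nonneg (fun i _ => sq_nonneg (v i))).1 h i (Finset.mem_univ i)
  exact pow_eq_zero_iff (by norm_num) |>.1 this

lemma normSq_pos {n : ℕ} {v : Fin n → ℝ} (h : v ≠ 0) : 0 < normSq v :=
  (normSq_nonneg v).lt_of_ne fun h0 => h (normSq_eq_zero h0.symm)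

lemma frobSq_eq_sum_rows {m n : ℕ} (A : Matrix (Fin m) (Fin n) ℝ) :
    frobSq A = ∑ i, normSq (A i) := rfl

lemma frobSq_nonneg {m n : ℕ} (A : Matrix (Fin m) (Fin n) ℝ) : 0 ≤ frobSq A :=
  Finset.sum_nonneg fun i _ => normSq_nonneg _

lemma frobSq_pos {m n : ℕ} {A : Matrix (Fin m) (Fin n) ℝ} (hA : A ≠ 0) : 0 < frobSq A := by
  have : ∃ i, A i ≠ 0 := by
    by_contra h
    push_neg at h
    exact hA (by ext i j; exact congrFun (h i) j)
  obtain ⟨i, hi⟩ := this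
  rw [frobSq_eq_sum_rows]
  calc (0:ℝ) < normSq (A i) := normSq_pos hi
    _ ≤ ∑ i, normSq (A i) :=
      Finset.single_le_sum (fun j _ => normSq_nonneg (A j)) (Finset.mem_univ i)

lemma normSq_mulVec {m n : ℕ} (A : Matrix (Fin m) (Fin n) ℝ) (v : Fin n → ℝ) :
    normSq (A.mulVec v) = dot v ((Aᵀ * A).mulVec v) := by
  rw [normSq_eq_dot, dot_eq, dot_eq, ← Matrix.mulVec_mulVec,
    Matrix.dotProduct_mulVec v, Matrix.vecMul_transpose]

/-- Key spectral bound: on the row space, the quadratic form of `AᵀA` is bounded below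
by `σ_min²`. -/
lemma key {m n : ℕ} (A : Matrix (Fin m) (Fin n) ℝ) (σ : ℝ)
    (hσ : IsSmallestNonzeroSingularValue A σ) (v : Fin n → ℝ) (hv : v ∈ rowSpace A) :
    σ ^ 2 * normSq v ≤ normSq (A.mulVec v) := by
  obtain ⟨u', rfl⟩ := hv
  set v := Aᵀ.mulVec u' with hv
  have hM : (Aᵀ * A).IsHermitian := by
    simpa [Matrix.conjTranspose_eq_transpose_of_trivial] using
      Matrix.isHermitian_conjTranspose_mul_self A
  set M := Aᵀ * A with hMdef
  set b := hM.eigenvectorBasis with hb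
  set lam := hM.eigenvalues with hlam
  set u : Fin n → Fin n → ℝ := fun j => ⇑(b j) with hu
  have hMu : ∀ j, M.mulVec (u j) = lam j • u j := fun j => hM.mulVec_eigenvectorBasis j
  set c : Fin n → ℝ := fun j => dot (u j) v with hc
  have parseval : ∀ x y : Fin n → ℝ, dot x y = ∑ j, dot x (u j) * dot (u j) y := by
    intro x y
    have := (b.sum_inner_mul_inner (WithLp.toLp 2 x : EuclideanSpace ℝ (Fin n))
      (WithLp.toLp 2 y : EuclideanSpace ℝ (Fin n))).symm
    simpa only [inner_eq_dot, WithLp.ofLp_toLp] using this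
  have h1 : normSq v = ∑ j, c j ^ 2 := by
    rw [normSq_eq_dot, parseval v v]
    exact Finset.sum_congr rfl fun j _ => by rw [dot_comm v (u j)]; ring
  have hMsymm : Mᵀ = M := by
    have := hM
    rwa [Matrix.IsHermitian, Matrix.conjTranspose_eq_transpose_of_trivial] at this
  have hdotM : ∀ (x y : Fin n → ℝ), dot x (M.mulVec y) = dot (M.mulVec x) y := by
    intro x y
    rw [dot_eq, dot_eq, Matrix.dotProduct_mulVec x]
    congr 1
    rw [← Matrix.mulVec_transpose, hMsymm]
  have h2 : dot v (M.mulVec v) = ∑ j, lam j * c j ^ 2 := by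
    rw [parseval v (M.mulVec v)]
    refine Finset.sum_congr rfl fun j _ => ?_
    rw [hdotM (u j) v, hMu j, dot_smul_left, dot_comm v (u j)]
    simp only [hc]; ring
  have h4 : ∀ j, lam j = 0 → c j = 0 := by
    intro j hj
    have hAuj : A.mulVec (u j) = 0 := by
      apply normSq_eq_zero
      rw [normSq_mulVec, ← hMdef, hMu j, hj, zero_smul]
      simp [dot]
    rw [hc]
    calc dot (u j) (Aᵀ.mulVec u') = dot (A.mulVec (u j)) u' := by
          rw [dot_eq, dot_eq, Matrix.dotProduct_mulVec (u j), ← Matrix.mulVec_transpose,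
            Matrix.transpose_transpose]
      _ = 0 := by rw [hAuj]; simp [dot]
  have h5 : ∀ j, lam j ≠ 0 → σ ^ 2 ≤ lam j := by
    intro j hj
    refine hσ.2.2 (lam j) hj ⟨u j, ?_, by rw [← hMdef]; exact hMu j⟩
    intro h0
    exact b.orthonormal.ne_zero j (by ext i; exact congrFun h0 i)
  rw [h1, normSq_mulVec, ← hMdef, h2, Finset.mul_sum]
  refine Finset.sum_le_sum fun j _ => ?_
  rcases eq_or_ne (lam j) 0 with h | h
  · rw [h4 j h]; simp [h]
  · exact mul_le_mul_of_nonneg_right (h5 j h) (sq_nonneg _)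

/-- `σ_min² ≤ ‖A‖_F²`. -/
lemma sigma_sq_le_frobSq {m n : ℕ} (A : Matrix (Fin m) (Fin n) ℝ) (σ : ℝ)
    (hσ : IsSmallestNonzeroSingularValue A σ) : σ ^ 2 ≤ frobSq A := by
  obtain ⟨v, hv0, hveq⟩ := hσ.2.1
  have hN : 0 < normSq v := normSq_pos hv0
  have h1 : σ ^ 2 * normSq v = normSq (A.mulVec v) := by
    rw [normSq_mulVec, hveq, dot_comm, dot_smul_left, dot_comm, normSq_eq_dot]
  have h2 : normSq (A.mulVec v) ≤ frobSq A * normSq v := by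
    rw [frobSq_eq_sum_rows, Finset.sum_mul]
    refine Finset.sum_le_sum fun i _ => ?_
    have := Finset.sum_mul_sq_le_sq_mul_sq Finset.univ (A i) v
    simpa [normSq, Matrix.mulVec, dotProduct, sq] using this
  have := h1 ▸ h2
  exact le_of_mul_le_mul_right this hN

lemma normSq_sub_smul {n : ℕ} (u w : Fin n → ℝ) (q : ℝ) :
    normSq (u - q • w) = normSq u - 2 * q * dot u w + q ^ 2 * normSq w := by
  unfold normSq dot
  rw [Finset.mul_sum, Finset.mul_sum, ← Finset.sum_sub_distrib, ← Finset.sum_add_distrib]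
  refine Finset.sum_congr rfl fun i _ => ?_
  simp only [Pi.sub_apply, Pi.smul_apply, smul_eq_mul]
  ring

lemma dot_sub_right {n : ℕ} (w u v : Fin n → ℝ) : dot w (u - v) = dot w u - dot w v := by
  simp [dot, mul_sub, Finset.sum_sub_distrib]

/-- Per-step error identity for the noisy Kaczmarz step. -/
lemma step_err {m n : ℕ} (A : Matrix (Fin m) (Fin n) ℝ) (b eps : Fin m → ℝ)
    (xLS : Fin n → ℝ) (hLS : A.mulVec xLS = b) (i : Fin m) (hrow : A i ≠ 0) (x : Fin n → ℝ) :
    normSq (rkStep A (b + eps) i x - xLS) =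
      normSq (x - xLS) - ((dot (A i) (x - xLS)) ^ 2 - eps i ^ 2) / normSq (A i) := by
  have hα : normSq (A i) ≠ 0 := ne_of_gt (normSq_pos hrow)
  have hbi : dot (A i) xLS = b i := by
    rw [dot_eq]; exact congrFun hLS i
  have hq : dot (A i) x - (b + eps) i = dot (A i) (x - xLS) - eps i := by
    rw [dot_sub_right, hbi]
    simp [Pi.add_apply]
    ring
  have hstep : rkStep A (b + eps) i x - xLS =
      (x - xLS) - ((dot (A i) (x - xLS) - eps i) / normSq (A i)) • A i := by
    rw [rkStep, hq, sub_right_comm]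
  rw [hstep, normSq_sub_smul, dot_comm (x - xLS) (A i)]
  field_simp
  ring

/-- The sampling probabilities sum to `1`. -/
lemma sum_probs {m n : ℕ} {A : Matrix (Fin m) (Fin n) ℝ} (hA : A ≠ 0) :
    ∑ i, normSq (A i) / frobSq A = 1 := by
  rw [← Finset.sum_div, ← frobSq_eq_sum_rows, div_self (ne_of_gt (frobSq_pos hA))]

/-- One-step expectation bound on the invariant affine set. -/
lemma step_exp_bound {m n : ℕ} {A : Matrix (Fin m) (Fin n) ℝ} (b eps : Fin m → ℝ)
    (xLS : Fin n → ℝ) (hLS : A.mulVec xLS = b) (hA : A ≠ 0) (hrows : ∀ i, A i ≠ 0)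
    (σ : ℝ) (hσ : IsSmallestNonzeroSingularValue A σ)
    (x : Fin n → ℝ) (hx : x - xLS ∈ rowSpace A) :
    ∑ i, normSq (A i) / frobSq A * normSq (rkStep A (b + eps) i x - xLS) ≤
      (1 - σ ^ 2 / frobSq A) * normSq (x - xLS) + normSq eps / frobSq A := by
  have hF : 0 < frobSq A := frobSq_pos hA
  have hcalc : ∑ i, normSq (A i) / frobSq A * normSq (rkStep A (b + eps) i x - xLS) =
      normSq (x - xLS) - normSq (A.mulVec (x - xLS)) / frobSq A + normSq eps / frobSq A := by
    have h1 : ∀ i, normSq (A i) / frobSq A * normSq (rkStep A (b + eps) i x - xLS) =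
        normSq (A i) / frobSq A * normSq (x - xLS)
          - ((dot (A i) (x - xLS)) ^ 2 - eps i ^ 2) / frobSq A := by
      intro i
      rw [step_err A b eps xLS hLS i (hrows i) x]
      have hα : normSq (A i) ≠ 0 := ne_of_gt (normSq_pos (hrows i))
      field_simp
    rw [Finset.sum_congr rfl fun i _ => h1 i, Finset.sum_sub_distrib, ← Finset.sum_mul,
      sum_probs hA, one_mul]
    have h2 : ∑ i, ((dot (A i) (x - xLS)) ^ 2 - eps i ^ 2) / frobSq A =
        normSq (A.mulVec (x - xLS)) / frobSq A - normSq eps / frobSq A := by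
      rw [← Finset.sum_div, Finset.sum_sub_distrib, sub_div]
      rfl
    rw [h2]
    ring
  rw [hcalc]
  have hkey := key A σ hσ (x - xLS) hx
  have : normSq (x - xLS) - normSq (A.mulVec (x - xLS)) / frobSq A ≤
      normSq (x - xLS) - σ ^ 2 * normSq (x - xLS) / frobSq A := by
    gcongr
  calc normSq (x - xLS) - normSq (A.mulVec (x - xLS)) / frobSq A + normSq eps / frobSq A ≤
      normSq (x - xLS) - σ ^ 2 * normSq (x - xLS) / frobSq A + normSq eps / frobSq A := by
        linarith
    _ = (1 - σ ^ 2 / frobSq A) * normSq (x - xLS) + normSq eps / frobSq A := by ring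

/-- Monotonicity of `rkExp` relative to an invariant set. -/
lemma rkExp_mono {m n : ℕ} {A : Matrix (Fin m) (Fin n) ℝ} (bt : Fin m → ℝ)
    (S : Set (Fin n → ℝ)) (hS : ∀ i x, x ∈ S → rkStep A bt i x ∈ S)
    (x0 : Fin n → ℝ) (hx0 : x0 ∈ S) :
    ∀ (k : ℕ) (f g : (Fin n → ℝ) → ℝ), (∀ x ∈ S, f x ≤ g x) →
      rkExp A bt x0 k f ≤ rkExp A bt x0 k g := by
  intro k
  induction k with
  | zero => intro f g h; exact h x0 hx0
  | succ k ih =>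
    intro f g h
    refine ih _ _ fun x hx => ?_
    refine Finset.sum_le_sum fun i _ => ?_
    exact mul_le_mul_of_nonneg_left (h _ (hS i x hx))
      (div_nonneg (normSq_nonneg _) (frobSq_nonneg A))

/-- `rkExp` of an affine image of `f`. -/
lemma rkExp_affine {m n : ℕ} {A : Matrix (Fin m) (Fin n) ℝ} (hA : A ≠ 0) (bt : Fin m → ℝ)
    (x0 : Fin n → ℝ) :
    ∀ (k : ℕ) (f : (Fin n → ℝ) → ℝ) (r d : ℝ),
      rkExp A bt x0 k (fun x => r * f x + d) = r * rkExp A bt x0 k f + d := by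
  intro k
  induction k with
  | zero => intro f r d; rfl
  | succ k ih =>
    intro f r d
    have hfun : (fun x => ∑ i, normSq (A i) / frobSq A * (r * f (rkStep A bt i x) + d)) =
        fun x => r * (∑ i, normSq (A i) / frobSq A * f (rkStep A bt i x)) + d := by
      funext x
      calc ∑ i, normSq (A i) / frobSq A * (r * f (rkStep A bt i x) + d)
          = ∑ i, (r * (normSq (A i) / frobSq A * f (rkStep A bt i x))
              + normSq (A i) / frobSq A * d) :=
            Finset.sum_congr rfl fun i _ => by ring
        _ = r * (∑ i, normSq (A i) / frobSq A * f (rkStep A bt i x))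
              + (∑ i, normSq (A i) / frobSq A) * d := by
            rw [Finset.sum_add_distrib, Finset.mul_sum, Finset.sum_mul]
        _ = r * (∑ i, normSq (A i) / frobSq A * f (rkStep A bt i x)) + d := by
            rw [sum_probs hA, one_mul]
    calc rkExp A bt x0 (k + 1) (fun x => r * f x + d)
        = rkExp A bt x0 k (fun x => ∑ i, normSq (A i) / frobSq A
            * (r * f (rkStep A bt i x) + d)) := rfl
      _ = rkExp A bt x0 k (fun x => r * (∑ i, normSq (A i) / frobSq A
            * f (rkStep A bt i x)) + d) := by rw [hfun]
      _ = r * rkExp A bt x0 k (fun x => ∑ i, normSq (A i) / frobSq A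
            * f (rkStep A bt i x)) + d := ih _ r d
      _ = r * rkExp A bt x0 (k + 1) f + d := rfl

/-- **Theorem 1.2 (Zouzias–Freris).** For `b ∈ range(A)`, noise `ε`, RK applied to
`Ax ≈ b + ε` with `x₀ ∈ range(Aᵀ)`, and `x_LS = A†b`:
`𝔼‖x_k − x_LS‖² ≤ (1 − σ_min²/‖A‖_F²)^k ‖x₀ − x_LS‖² + ‖ε‖²/σ_min²`. -/
theorem rk_zouzias_freris {m n : ℕ}
    (A : Matrix (Fin m) (Fin n) ℝ) (b : Fin m → ℝ)
    (hA : A ≠ 0) (hrows : ∀ i, A i ≠ 0)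
    (hcons : ∃ x, A.mulVec x = b)
    (eps : Fin m → ℝ)
    (Ap : Matrix (Fin n) (Fin m) ℝ) (hAp : IsMoorePenrose A Ap)
    (σmin : ℝ) (hσ : IsSmallestNonzeroSingularValue A σmin)
    (x0 : Fin n → ℝ) (hx0 : x0 ∈ rowSpace A)
    (k : ℕ) :
    rkExp A (b + eps) x0 k (fun y => normSq (y - Ap.mulVec b)) ≤
      (1 - σmin ^ 2 / frobSq A) ^ k * normSq (x0 - Ap.mulVec b)
        + normSq eps / σmin ^ 2 := by
  obtain ⟨xh, hxh⟩ := hcons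
  set xLS := Ap.mulVec b with hxLS
  set F := frobSq A with hFdef
  have hF : 0 < F := frobSq_pos hA
  have hσ0 : 0 < σmin := hσ.1
  have hσ2 : 0 < σmin ^ 2 := by positivity
  set r := 1 - σmin ^ 2 / F with hrdef
  have hr0 : 0 ≤ r := by
    have := sigma_sq_le_frobSq A σmin hσ
    rw [hrdef]
    have : σmin ^ 2 / F ≤ 1 := (div_le_one hF).2 this
    linarith
  have hr1 : r < 1 := by
    rw [hrdef]
    have : 0 < σmin ^ 2 / F := by positivity
    linarith
  -- least squares solution facts
  have hALS : A.mulVec xLS = b := by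
    rw [hxLS, ← hxh, Matrix.mulVec_mulVec, Matrix.mulVec_mulVec, hAp.1]
  have hLSrow : xLS ∈ rowSpace A := by
    refine ⟨Apᵀ.mulVec xh, ?_⟩
    calc xLS = (Ap * A) *ᵥ xh := by rw [hxLS, ← hxh, Matrix.mulVec_mulVec]
      _ = (Ap * A)ᵀ *ᵥ xh := by rw [hAp.2.2.2]
      _ = (Aᵀ * Apᵀ) *ᵥ xh := by rw [Matrix.transpose_mul]
      _ = Aᵀ *ᵥ (Apᵀ *ᵥ xh) := by rw [Matrix.mulVec_mulVec]
  -- the invariant set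
  set S : Set (Fin n → ℝ) := {x | x - xLS ∈ rowSpace A} with hSdef
  have hrowsub : ∀ u v : Fin n → ℝ, u ∈ rowSpace A → v ∈ rowSpace A → u - v ∈ rowSpace A := by
    rintro u v ⟨a, rfl⟩ ⟨c, rfl⟩
    exact ⟨a - c, by rw [Matrix.mulVec_sub]⟩
  have hx0S : x0 ∈ S := hrowsub x0 xLS hx0 hLSrow
  have hrowA : ∀ i, A i ∈ rowSpace A := by
    intro i
    refine ⟨Pi.single i 1, ?_⟩
    funext j
    simp [Matrix.mulVec_single]
  have hS : ∀ i x, x ∈ S → rkStep A (b + eps) i x ∈ S := by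
    intro i x hx
    have hstep : rkStep A (b + eps) i x - xLS =
        (x - xLS) - ((dot (A i) x - (b + eps) i) / normSq (A i)) • A i := by
      rw [rkStep, sub_right_comm]
    show rkStep A (b + eps) i x - xLS ∈ rowSpace A
    rw [hstep]
    obtain ⟨w, hw⟩ := hx
    obtain ⟨p, hp⟩ := hrowA i
    exact ⟨w - ((dot (A i) x - (b + eps) i) / normSq (A i)) • p,
      by rw [Matrix.mulVec_sub, Matrix.mulVec_smul, ← hw, ← hp]⟩
  -- main induction
  have main : ∀ k : ℕ, rkExp A (b + eps) x0 k (fun y => normSq (y - xLS)) ≤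
      r ^ k * normSq (x0 - xLS) + (normSq eps / F) * ∑ j ∈ Finset.range k, r ^ j := by
    intro k
    induction k with
    | zero => simp [rkExp]
    | succ k ih =>
      have hstep1 : rkExp A (b + eps) x0 (k + 1) (fun y => normSq (y - xLS)) =
          rkExp A (b + eps) x0 k (fun x => ∑ i, normSq (A i) / frobSq A
            * normSq (rkStep A (b + eps) i x - xLS)) := rfl
      rw [hstep1]
      have hmono := rkExp_mono (b + eps) S hS x0 hx0S k
        (fun x => ∑ i, normSq (A i) / frobSq A * normSq (rkStep A (b + eps) i x - xLS))
        (fun x => r * normSq (x - xLS) + normSq eps / F)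
        (fun x hx => by
          have := step_exp_bound b eps xLS hALS hA hrows σmin hσ x hx
          simpa [hrdef, hFdef] using this)
      refine hmono.trans ?_
      rw [rkExp_affine hA (b + eps) x0 k (fun x => normSq (x - xLS)) r (normSq eps / F)]
      have hgs : r * (r ^ k * normSq (x0 - xLS)
            + (normSq eps / F) * ∑ j ∈ Finset.range k, r ^ j) + normSq eps / F =
          r ^ (k + 1) * normSq (x0 - xLS)
            + (normSq eps / F) * ∑ j ∈ Finset.range (k + 1), r ^ j := by
        rw [geom_sum_succ]
        ring
      calc r * rkExp A (b + eps) x0 k (fun x => normSq (x - xLS)) + normSq eps / F ≤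
          r * (r ^ k * normSq (x0 - xLS)
            + (normSq eps / F) * ∑ j ∈ Finset.range k, r ^ j) + normSq eps / F := by
            have := mul_le_mul_of_nonneg_left ih hr0
            linarith
        _ = _ := hgs
  refine (main k).trans ?_
  have hgeom : ∑ j ∈ Finset.range k, r ^ j ≤ F / σmin ^ 2 := by
    have h1r : 1 - r = σmin ^ 2 / F := by rw [hrdef]; ring
    have hrne : r ≠ 1 := ne_of_lt hr1
    have h1rpos : 0 < 1 - r := by linarith
    have hrk : (0:ℝ) ≤ r ^ k := pow_nonneg hr0 k
    calc ∑ j ∈ Finset.range k, r ^ j = (r ^ k - 1) / (r - 1) := geom_sum_eq hrne k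
      _ = (1 - r ^ k) / (1 - r) := by rw [← neg_div_neg_eq, neg_sub, neg_sub]
      _ ≤ 1 / (1 - r) := by gcongr; linarith
      _ = F / σmin ^ 2 := by rw [h1r, one_div, inv_div]
  have hc : 0 ≤ normSq eps / F := div_nonneg (normSq_nonneg eps) hF.le
  have h2 : (normSq eps / F) * ∑ j ∈ Finset.range k, r ^ j ≤
      (normSq eps / F) * (F / σmin ^ 2) := mul_le_mul_of_nonneg_left hgeom hc
  have h3 : (normSq eps / F) * (F / σmin ^ 2) = normSq eps / σmin ^ 2 := by
    field_simp
  linarith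

end RK
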